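/- Deterministic version of the slope-variance inequality: for positive reals σ_j² and reals y_j with ∑_j y_j = 0, not all y_j zero, one has (∑_j y_j² σ_j²)/(∑_j y_j²)² ≥ (∑_j 1/σ_j²)/[(∑_j 1/σ_j²)(∑_j y_j²/σ_j²) − (∑_j y_j/σ_j²)²]. -/

import Mathlib

theorem slope_variance_inequality_deterministic
    (N : ℕ) (y σ2 : Fin N → ℝ) (hσ : ∀ j, 0 < σ2 j)
    (hy0 : ∑ j, y j = 0) (hyne : ∃ j, y j ≠ 0)
    (hDpos : 0 < (∑ j, 1 / σ2 j) * (∑ j, y j ^ 2 / σ2 j) - (∑ j, y j / σ2 j) ^ 2) :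
    (∑ j, y j ^ 2 * σ2 j) / (∑ j, y j ^ 2) ^ 2
      ≥ (∑ j, 1 / σ2 j)
        / ((∑ j, 1 / σ2 j) * (∑ j, y j ^ 2 / σ2 j) - (∑ j, y j / σ2 j) ^ 2) := by
  obtain ⟨j0, hj0⟩ := hyne
  set R := ∑ j, 1 / σ2 j with hR
  set L := ∑ j, y j / σ2 j with hL
  set Q := ∑ j, y j ^ 2 / σ2 j with hQ
  set S := ∑ j, y j ^ 2 with hS
  set A := ∑ j, y j ^ 2 * σ2 j with hA
  set D := R * Q - L ^ 2 with hD
  have hSpos : 0 < S := by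
    apply Finset.sum_pos' (fun j _ => sq_nonneg _)
    exact ⟨j0, Finset.mem_univ _, by positivity⟩
  have hRpos : 0 < R := by
    apply Finset.sum_pos' (fun j _ => by have := hσ j; positivity)
    exact ⟨j0, Finset.mem_univ _, by have := hσ j0; positivity⟩
  -- Cauchy-Schwarz with f j = y j * sqrt(σ2 j), g j = (R * y j - L) / sqrt(σ2 j)
  have key : (R * S) ^ 2 ≤ A * (R * D) := by
    have hcs := Finset.sum_mul_sq_le_sq_mul_sq Finset.univ
      (fun j => y j * Real.sqrt (σ2 j)) (fun j => (R * y j - L) / Real.sqrt (σ2 j))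
    have h1 : ∀ j, y j * Real.sqrt (σ2 j) * ((R * y j - L) / Real.sqrt (σ2 j))
        = R * y j ^ 2 - L * y j := by
      intro j
      have hs : Real.sqrt (σ2 j) ≠ 0 := by
        have := hσ j; positivity
      field_simp
    have h2 : ∀ j, (y j * Real.sqrt (σ2 j)) ^ 2 = y j ^ 2 * σ2 j := by
      intro j
      rw [mul_pow, Real.sq_sqrt (hσ j).le]
    have h3 : ∀ j, ((R * y j - L) / Real.sqrt (σ2 j)) ^ 2
        = R ^ 2 * (y j ^ 2 / σ2 j) - 2 * R * L * (y j / σ2 j) + L ^ 2 * (1 / σ2 j) := by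
      intro j
      have hs : (σ2 j) ≠ 0 := (hσ j).ne'
      rw [div_pow, Real.sq_sqrt (hσ j).le]
      field_simp
      ring
    simp only [h1, h2, h3, Finset.sum_add_distrib, Finset.sum_sub_distrib,
      ← Finset.mul_sum] at hcs
    rw [← hS, ← hQ, ← hL, ← hR, ← hA, hy0] at hcs
    calc (R * S) ^ 2 = (R * S - L * 0) ^ 2 := by ring
      _ ≤ A * (R ^ 2 * Q - 2 * R * L * L + L ^ 2 * R) := hcs
      _ = A * (R * D) := by rw [hD]; ring
  rw [ge_iff_le, div_le_div_iff₀ hDpos (by positivity)]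
  have hAnn : 0 ≤ A := Finset.sum_nonneg fun j _ => by have := hσ j; positivity
  nlinarith [key, sq_nonneg R, hRpos]
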